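/- arXiv:1207.2274 — 2 statements merged into one kernel-verified Lean document; each statement's English description precedes it below -/
import Mathlib

section
/- Fix an integer N > 1. Let (S₁,…,S_N) be an mKdV tuple of subsets and let i ∈ {1,…,N}. Then there exists a unique KdV subset S̃_i with S̃_i ≠ S_i such that the tuple obtained from (S₁,…,S_N) by replacing the i-th entry S_i with S̃_i is again an mKdV tuple of subsets. -/
/-- A subset `S ⊆ ℤ` is of virtual cardinal zero if both `S \ ℤ≥0` and `ℤ≥0 \ S`
are finite and have the same cardinality. -/
def VirtualCardZero (S : Set ℤ) : Prop :=
  (S \ {n : ℤ | 0 ≤ n}).Finite ∧ ({n : ℤ | 0 ≤ n} \ S).Finite ∧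
    (S \ {n : ℤ | 0 ≤ n}).ncard = ({n : ℤ | 0 ≤ n} \ S).ncard

/-- The shift `S + k = {s + k : s ∈ S}` of a set of integers. -/
def shiftSet (S : Set ℤ) (k : ℤ) : Set ℤ := (fun s => s + k) '' S

/-- A KdV subset (for a fixed `N`): a subset `S ⊆ ℤ` of virtual cardinal zero
such that `S + N ⊆ S`. -/
def IsKdV (N : ℕ) (S : Set ℤ) : Prop :=
  VirtualCardZero S ∧ shiftSet S N ⊆ S

/-- `A` is the leading term of the KdV subset `S`: `A` is an `N`-element set with
`S = A ∪ (S+N)` and `A ∩ (S+N) = ∅`. -/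
def IsLeadingTerm (N : ℕ) (S : Set ℤ) (A : Finset ℤ) : Prop :=
  A.card = N ∧ (↑A : Set ℤ) ∪ shiftSet S N = S ∧ (↑A : Set ℤ) ∩ shiftSet S N = ∅

/-- The mutation `S[a] = {a+1−N} ∪ (S+1)` of a KdV subset `S` at an element `a`
of its leading term. -/
def mutate (N : ℕ) (S : Set ℤ) (a : ℤ) : Set ℤ :=
  {a + 1 - (N : ℤ)} ∪ shiftSet S 1

/-- An mKdV tuple of subsets: an `N`-tuple `(S₁,…,S_N)` of KdV subsets with
`S_i + 1 ⊆ S_{i+1}` for `i = 1,…,N−1` and `S_N + 1 ⊆ S₁` (i.e. cyclically). -/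
def IsMKdVTuple (N : ℕ) [NeZero N] (T : Fin N → Set ℤ) : Prop :=
  (∀ i, IsKdV N (T i)) ∧ ∀ i : Fin N, shiftSet (T i) 1 ⊆ T (i + 1)

namespace MKdVAux
open Set

abbrev P : Set ℤ := {n : ℤ | 0 ≤ n}

def Fin2 (S : Set ℤ) : Prop := (S \ P).Finite ∧ (P \ S).Finite

noncomputable def vInt (S : Set ℤ) : ℤ := ((S \ P).ncard : ℤ) - ((P \ S).ncard : ℤ)

lemma mem_shiftSet {S : Set ℤ} {k z : ℤ} : z ∈ shiftSet S k ↔ z - k ∈ S := by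
  constructor
  · rintro ⟨s, hs, rfl⟩; simpa using hs
  · intro h; exact ⟨z - k, h, by ring⟩

lemma shift1_diff_neg (S : Set ℤ) :
    shiftSet S 1 \ P = (fun x => x + 1) '' (S \ {n : ℤ | -1 ≤ n}) := by
  ext z
  simp only [mem_diff, mem_shiftSet, mem_image, mem_setOf_eq]
  constructor
  · rintro ⟨h1, h2⟩; exact ⟨z - 1, ⟨h1, by omega⟩, by ring⟩
  · rintro ⟨x, ⟨hx1, hx2⟩, rfl⟩; exact ⟨by simpa using hx1, by omega⟩

lemma shift1_diff_pos (S : Set ℤ) :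
    P \ shiftSet S 1 = (fun x => x + 1) '' ({n : ℤ | -1 ≤ n} \ S) := by
  ext z
  simp only [mem_diff, mem_shiftSet, mem_image, mem_setOf_eq]
  constructor
  · rintro ⟨h1, h2⟩; exact ⟨z - 1, ⟨by omega, h2⟩, by ring⟩
  · rintro ⟨x, ⟨hx1, hx2⟩, rfl⟩; exact ⟨by omega, by simpa using hx2⟩

lemma inj1 : Function.Injective (fun x : ℤ => x + 1) := fun a b h => by simpa using h

lemma thr_neg (S : Set ℤ) : S \ {n : ℤ | -1 ≤ n} = (S \ P) \ {-1} := by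
  ext z
  by_cases hz : z ∈ S <;> simp [mem_diff, hz] <;> omega

lemma thr_pos_mem {S : Set ℤ} (h : -1 ∈ S) : {n : ℤ | -1 ≤ n} \ S = P \ S := by
  ext z
  by_cases hz : z ∈ S <;> simp [mem_diff, hz]
  constructor <;> intro h' <;> [skip; omega]
  rcases eq_or_lt_of_le h' with h'' | h''
  · exact absurd (h'' ▸ h) hz
  · omega

lemma thr_pos_not_mem {S : Set ℤ} (h : -1 ∉ S) :
    {n : ℤ | -1 ≤ n} \ S = insert (-1) (P \ S) := by
  ext z
  by_cases hz : z ∈ S <;> simp [mem_diff, hz]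
  · intro h'; exact h (h' ▸ hz)
  · omega

lemma fin2_shift1 {S : Set ℤ} (h : Fin2 S) : Fin2 (shiftSet S 1) := by
  constructor
  · rw [shift1_diff_neg, thr_neg]
    exact ((h.1.subset diff_subset)).image _
  · rw [shift1_diff_pos]
    by_cases hm : -1 ∈ S
    · rw [thr_pos_mem hm]; exact h.2.image _
    · rw [thr_pos_not_mem hm]; exact (h.2.insert _).image _

lemma vInt_shift1 {S : Set ℤ} (h : Fin2 S) : vInt (shiftSet S 1) = vInt S - 1 := by
  unfold vInt
  rw [shift1_diff_neg, shift1_diff_pos, Set.ncard_image_of_injective _ inj1,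
    Set.ncard_image_of_injective _ inj1, thr_neg]
  by_cases hm : -1 ∈ S
  · rw [thr_pos_mem hm]
    have hmem : (-1 : ℤ) ∈ S \ P := ⟨hm, by norm_num⟩
    rw [Set.ncard_diff_singleton_of_mem hmem]
    have h1 : 1 ≤ (S \ P).ncard := Set.ncard_pos h.1 |>.mpr ⟨_, hmem⟩
    push_cast [Nat.cast_sub h1]
    ring
  · rw [thr_pos_not_mem hm]
    have hnm : (-1 : ℤ) ∉ S \ P := fun h' => hm h'.1
    have hnm2 : (-1 : ℤ) ∉ P \ S := fun h' => absurd h'.1 (by norm_num)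
    rw [Set.ncard_insert_of_notMem hnm2 h.2]
    have : (S \ P) \ {-1} = S \ P := by
      ext z; simp only [mem_diff, mem_singleton_iff]
      exact ⟨fun h' => h'.1, fun h' => ⟨h', fun hz => hnm (hz ▸ h')⟩⟩
    rw [this]; push_cast; ring

lemma fin2_of_shift1 {S : Set ℤ} (h : Fin2 (shiftSet S 1)) : Fin2 S := by
  have h1 : (S \ {n : ℤ | -1 ≤ n}).Finite := by
    have := h.1; rw [shift1_diff_neg] at this
    exact Set.Finite.of_finite_image this (inj1.injOn)
  have h2 : ({n : ℤ | -1 ≤ n} \ S).Finite := by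
    have := h.2; rw [shift1_diff_pos] at this
    exact Set.Finite.of_finite_image this (inj1.injOn)
  constructor
  · refine (h1.union (finite_singleton (-1))).subset ?_
    rintro z ⟨hzS, hzP⟩
    simp only [mem_setOf_eq, not_le] at hzP
    rcases eq_or_lt_of_le (by omega : z ≤ -1) with h' | h'
    · exact Or.inr (by simp [h'])
    · exact Or.inl ⟨hzS, fun hc => by simp only [Set.mem_setOf_eq] at hc; omega⟩
  · refine h2.subset (fun z hz => ⟨?_, hz.2⟩)
    have := hz.1
    simp only [mem_setOf_eq] at this ⊢
    omega

lemma vInt_insert {S : Set ℤ} (h : Fin2 S) {z : ℤ} (hz : z ∉ S) :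
    Fin2 (insert z S) ∧ vInt (insert z S) = vInt S + 1 := by
  rcases le_or_gt 0 z with hzp | hzn
  · have e1 : insert z S \ P = S \ P := by
      ext w; simp only [mem_diff, mem_insert_iff, mem_setOf_eq]
      constructor
      · rintro ⟨rfl | hw, h2⟩
        · omega
        · exact ⟨hw, h2⟩
      · rintro ⟨h1, h2⟩; exact ⟨Or.inr h1, h2⟩
    have e2 : P \ insert z S = (P \ S) \ {z} := by
      ext w; simp only [mem_diff, mem_insert_iff, mem_setOf_eq, mem_singleton_iff]
      tauto
    have hmem : z ∈ P \ S := ⟨hzp, hz⟩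
    have hle : 1 ≤ (P \ S).ncard := Set.ncard_pos h.2 |>.mpr ⟨_, hmem⟩
    refine ⟨⟨e1 ▸ h.1, e2 ▸ (h.2.subset diff_subset)⟩, ?_⟩
    unfold vInt
    rw [e1, e2, Set.ncard_diff_singleton_of_mem hmem]
    push_cast [Nat.cast_sub hle]
    ring
  · have e1 : insert z S \ P = insert z (S \ P) := by
      ext w; simp only [mem_diff, mem_insert_iff, mem_setOf_eq]
      constructor
      · rintro ⟨rfl | hw, h2⟩
        · exact Or.inl rfl
        · exact Or.inr ⟨hw, h2⟩
      · rintro (rfl | ⟨h1, h2⟩)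
        · exact ⟨Or.inl rfl, by omega⟩
        · exact ⟨Or.inr h1, h2⟩
    have e2 : P \ insert z S = P \ S := by
      ext w; simp only [mem_diff, mem_insert_iff, mem_setOf_eq]
      constructor
      · rintro ⟨h1, h2⟩; exact ⟨h1, fun hw => h2 (Or.inr hw)⟩
      · rintro ⟨h1, h2⟩
        refine ⟨h1, ?_⟩
        rintro (rfl | hw)
        · omega
        · exact h2 hw
    have hnm : z ∉ S \ P := fun h' => hz h'.1
    refine ⟨⟨e1 ▸ (h.1.insert z), e2 ▸ h.2⟩, ?_⟩
    unfold vInt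
    rw [e1, e2, Set.ncard_insert_of_notMem hnm h.1]
    push_cast
    ring

lemma diff_count {A B : Set ℤ} (hAB : A ⊆ B) (hA : Fin2 A) (hB : Fin2 B) :
    (B \ A).Finite ∧ ((B \ A).ncard : ℤ) = vInt B - vInt A := by
  have hsub1 : A \ P ⊆ B \ P := fun z hz => ⟨hAB hz.1, hz.2⟩
  have hsub2 : P \ B ⊆ P \ A := fun z hz => ⟨hz.1, fun h => hz.2 (hAB h)⟩
  have edecomp : B \ A = ((B \ P) \ (A \ P)) ∪ ((P \ A) \ (P \ B)) := by
    ext z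
    simp only [mem_diff, mem_union, mem_setOf_eq]
    rcases le_or_gt 0 z with hz | hz <;> [tauto; tauto]
  have hXfin : ((B \ P) \ (A \ P)).Finite := hB.1.subset diff_subset
  have hYfin : ((P \ A) \ (P \ B)).Finite := hA.2.subset diff_subset
  have hdisj : Disjoint ((B \ P) \ (A \ P)) ((P \ A) \ (P \ B)) := by
    rw [Set.disjoint_left]
    rintro z ⟨⟨_, hz1⟩, _⟩ ⟨⟨hz2, _⟩, _⟩
    exact hz1 hz2
  have hfin : (B \ A).Finite := by rw [edecomp]; exact hXfin.union hYfin
  refine ⟨hfin, ?_⟩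
  rw [edecomp, Set.ncard_union_eq hdisj hXfin hYfin,
    Set.ncard_diff hsub1 (hA.1), Set.ncard_diff hsub2 (hB.2)]
  have l1 : (A \ P).ncard ≤ (B \ P).ncard := Set.ncard_le_ncard hsub1 hB.1
  have l2 : (P \ B).ncard ≤ (P \ A).ncard := Set.ncard_le_ncard hsub2 hA.2
  unfold vInt
  push_cast [Nat.cast_sub l1, Nat.cast_sub l2]
  ring

lemma vcz_iff {S : Set ℤ} : VirtualCardZero S ↔ Fin2 S ∧ vInt S = 0 := by
  unfold VirtualCardZero Fin2 vInt
  simp only [P]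
  constructor
  · rintro ⟨h1, h2, h3⟩; exact ⟨⟨h1, h2⟩, by omega⟩
  · rintro ⟨⟨h1, h2⟩, h3⟩; exact ⟨h1, h2, by omega⟩

end MKdVAux

open MKdVAux Set Fin.NatCast Fin.CommRing in
/-- Fix `N > 1`.  Let `(S₁,…,S_N)` be an mKdV tuple of subsets and
`i ∈ {1,…,N}`.  Then there is a unique KdV subset `S̃ᵢ ≠ Sᵢ` such that replacing the
`i`-th entry `Sᵢ` by `S̃ᵢ` again yields an mKdV tuple of subsets. -/
theorem mkdv_mutation_exists_unique (N : ℕ) [NeZero N] (hN : 1 < N)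
    (T : Fin N → Set ℤ) (hT : IsMKdVTuple N T) (i : Fin N) :
    ∃! S' : Set ℤ, IsKdV N S' ∧ S' ≠ T i ∧ IsMKdVTuple N (Function.update T i S') := by
  classical
  -- basic Fin N facts
  have hone : (1 : Fin N) ≠ 0 := by
    intro h
    have := Fin.one_eq_zero_iff.mp h
    omega
  have hsucc_ne : ∀ j : Fin N, j + 1 ≠ j := by
    intro j h
    exact hone (by
      have := congrArg (fun x => x - j) h
      simpa [add_comm, add_sub_cancel_right] using this)
  have hpred_ne : i - 1 ≠ i := by
    intro h
    have : i = i + 1 := by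
      have := congrArg (fun x => x + 1) h
      simpa [sub_add_cancel] using this
    exact hsucc_ne i this.symm
  have hpred_add : i - 1 + 1 = i := sub_add_cancel i 1
  -- the bounding sets
  set A : Set ℤ := shiftSet (T (i - 1)) 1 with hAdef
  set B : Set ℤ := {z : ℤ | z + 1 ∈ T (i + 1)} with hBdef
  have hBshift : shiftSet B 1 = T (i + 1) := by
    ext z
    rw [mem_shiftSet]
    simp only [hBdef, mem_setOf_eq, sub_add_cancel]
  -- vcard data
  have hTdata : ∀ j : Fin N, Fin2 (T j) ∧ vInt (T j) = 0 := by
    intro j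
    exact vcz_iff.mp (hT.1 j).1
  have hAfin : Fin2 A := fin2_shift1 (hTdata (i - 1)).1
  have hAv : vInt A = -1 := by
    have := vInt_shift1 (hTdata (i - 1)).1
    rw [← hAdef] at this
    rw [this, (hTdata (i - 1)).2]
    norm_num
  have hBfin : Fin2 B := by
    apply fin2_of_shift1
    rw [hBshift]
    exact (hTdata (i + 1)).1
  have hBv : vInt B = 1 := by
    have := vInt_shift1 hBfin
    rw [hBshift, (hTdata (i + 1)).2] at this
    omega
  -- inclusions
  have hAT : A ⊆ T i := by
    have := hT.2 (i - 1)
    rwa [hpred_add] at this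
  have hTB : T i ⊆ B := by
    intro z hz
    exact hT.2 i ⟨z, hz, rfl⟩
  have hAB : A ⊆ B := hAT.trans hTB
  -- the chain lemma
  have chain : ∀ (k : ℕ) (j : Fin N) (z : ℤ), z ∈ T j → z + k ∈ T (j + (k : Fin N)) := by
    intro k
    induction k with
    | zero => intro j z hz; simpa using hz
    | succ k ih =>
      intro j z hz
      have h1 := ih j z hz
      have h2 : (z + k) + 1 ∈ T (j + (k : Fin N) + 1) := hT.2 _ ⟨z + k, h1, rfl⟩
      have e1 : ((k + 1 : ℕ) : Fin N) = (k : Fin N) + 1 := by push_cast; ring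
      have e2 : ((k + 1 : ℕ) : ℤ) = (k : ℤ) + 1 := by push_cast; ring
      rw [e1, ← add_assoc, e2, ← add_assoc]
      exact h2
  -- B + N ⊆ A
  have hBA_N : ∀ z ∈ B, z + N ∈ A := by
    intro z hz
    have h1 : z + 1 ∈ T (i + 1) := hz
    have h2 := chain (N - 2) (i + 1) (z + 1) h1
    have eidx : (i + 1) + ((N - 2 : ℕ) : Fin N) = i - 1 := by
      have : ((N - 2 : ℕ) : Fin N) = ((N : ℕ) : Fin N) - ((2 : ℕ) : Fin N) :=
        Nat.cast_sub (R := Fin N) (by omega : 2 ≤ N)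
      rw [this, Fin.natCast_self]
      push_cast
      ring
    have eval : z + 1 + ((N - 2 : ℕ) : ℤ) = z + N - 1 := by
      have : ((N - 2 : ℕ) : ℤ) = (N : ℤ) - 2 := by
        push_cast [Nat.cast_sub (by omega : 2 ≤ N)]; ring
      rw [this]; ring
    rw [eidx, eval] at h2
    rw [hAdef, mem_shiftSet]
    simpa using h2
  -- A + N ⊆ A
  have hAA_N : ∀ z ∈ A, z + N ∈ A := by
    intro z hz
    rw [hAdef, mem_shiftSet] at hz ⊢
    have : z - 1 + N ∈ T (i - 1) := (hT.1 (i - 1)).2 ⟨z - 1, hz, rfl⟩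
    have e : z + N - 1 = z - 1 + N := by ring
    rwa [e]
  -- counting : B \ A has exactly two elements
  have hcount := diff_count hAB hAfin hBfin
  have hBA2 : (B \ A).ncard = 2 := by
    have := hcount.2
    rw [hBv, hAv] at this
    omega
  obtain ⟨x, y, hxy, hBAeq⟩ := Set.ncard_eq_two.mp hBA2
  -- T i = insert t A for some t in B \ A
  have hcount2 := diff_count hAT hAfin (hTdata i).1
  have hTi1 : (T i \ A).ncard = 1 := by
    have := hcount2.2
    rw [(hTdata i).2, hAv] at this
    omega
  obtain ⟨t, hteq⟩ := Set.ncard_eq_one.mp hTi1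
  have htmem : t ∈ T i \ A := hteq ▸ rfl
  have hTiA : T i = insert t A := by
    ext w
    simp only [mem_insert_iff]
    constructor
    · intro hw
      by_cases hwA : w ∈ A
      · exact Or.inr hwA
      · left
        have : w ∈ T i \ A := ⟨hw, hwA⟩
        rw [hteq] at this
        exact this
    · rintro (rfl | hw)
      · exact htmem.1
      · exact hAT hw
  have htBA : t ∈ B \ A := ⟨hTB htmem.1, htmem.2⟩
  -- find the other element s
  have hs_ex : ∃ s, s ≠ t ∧ B \ A = {t, s} := by
    rw [hBAeq] at htBA
    rcases htBA with rfl | rfl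
    · exact ⟨y, hxy.symm, by rw [hBAeq]⟩
    · exact ⟨x, hxy, by rw [hBAeq, Set.pair_comm]⟩
  obtain ⟨s, hst, hBApair⟩ := hs_ex
  have hsBA : s ∈ B \ A := by rw [hBApair]; exact Or.inr rfl
  -- the update equivalence
  have upd_iff : ∀ S' : Set ℤ,
      IsMKdVTuple N (Function.update T i S') ↔ (IsKdV N S' ∧ A ⊆ S' ∧ S' ⊆ B) := by
    intro S'
    constructor
    · intro h
      refine ⟨by simpa using h.1 i, ?_, ?_⟩
      · have := h.2 (i - 1)
        rwa [Function.update_of_ne hpred_ne, hpred_add, Function.update_self] at this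
      · have := h.2 i
        rw [Function.update_self, Function.update_of_ne (hsucc_ne i)] at this
        intro z hz
        exact this ⟨z, hz, rfl⟩
    · rintro ⟨hK, hA', hB'⟩
      constructor
      · intro j
        by_cases hj : j = i
        · subst hj; rwa [Function.update_self]
        · rw [Function.update_of_ne hj]; exact hT.1 j
      · intro j
        by_cases hj : j = i
        · subst hj
          rw [Function.update_self, Function.update_of_ne (hsucc_ne j)]
          rintro z ⟨w, hw, rfl⟩
          exact hB' hw
        · rw [Function.update_of_ne hj]
          by_cases hj1 : j + 1 = i
          · have hj' : j = i - 1 := by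
              rw [← hj1]; simp [add_sub_cancel_right]
            rw [hj1, Function.update_self, hj']
            exact hA'
          · rw [Function.update_of_ne hj1]
            exact hT.2 j
  -- the candidate
  have key : ∀ z ∈ B \ A, IsKdV N (insert z A) ∧ A ⊆ insert z A ∧ insert z A ⊆ B := by
    rintro z ⟨hzB, hzA⟩
    obtain ⟨hfin, hv⟩ := vInt_insert hAfin hzA
    refine ⟨⟨vcz_iff.mpr ⟨hfin, by rw [hv, hAv]; ring⟩, ?_⟩, subset_insert _ _, ?_⟩
    · rintro w ⟨u, hu, rfl⟩
      rcases hu with rfl | hu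
      · exact Or.inr (hBA_N u hzB)
      · exact Or.inr (hAA_N u hu)
    · rintro w (rfl | hw)
      · exact hzB
      · exact hAB hw
  -- characterization of any valid S'
  have char : ∀ S' : Set ℤ, IsKdV N S' → A ⊆ S' → S' ⊆ B → ∃ z ∈ B \ A, S' = insert z A := by
    intro S' hK hA' hB'
    have hdata := vcz_iff.mp hK.1
    have hc := diff_count hA' hAfin hdata.1
    have h1 : (S' \ A).ncard = 1 := by
      have := hc.2
      rw [hdata.2, hAv] at this
      omega
    obtain ⟨z, hzeq⟩ := Set.ncard_eq_one.mp h1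
    have hzmem : z ∈ S' \ A := hzeq ▸ rfl
    refine ⟨z, ⟨hB' hzmem.1, hzmem.2⟩, ?_⟩
    ext w
    simp only [mem_insert_iff]
    constructor
    · intro hw
      by_cases hwA : w ∈ A
      · exact Or.inr hwA
      · left
        have : w ∈ S' \ A := ⟨hw, hwA⟩
        rw [hzeq] at this
        exact this
    · rintro (rfl | hw)
      · exact hzmem.1
      · exact hA' hw
  -- conclusion
  refine ⟨insert s A, ⟨(key s hsBA).1, ?_, (upd_iff _).mpr
    ⟨(key s hsBA).1, (key s hsBA).2.1, (key s hsBA).2.2⟩⟩, ?_⟩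
  · -- insert s A ≠ T i
    intro h
    rw [hTiA] at h
    have : s ∈ insert t A := h ▸ mem_insert s A
    rcases this with h' | h'
    · exact hst h'
    · exact hsBA.2 h'
  · -- uniqueness
    rintro S' ⟨hK, hne, hupd⟩
    obtain ⟨hK', hA', hB'⟩ := (upd_iff S').mp hupd
    obtain ⟨z, hzBA, rfl⟩ := char S' hK hA' hB'
    have : z ∈ ({t, s} : Set ℤ) := hBApair ▸ hzBA
    rcases this with rfl | rfl
    · exact absurd (hTiA ▸ rfl) hne
    · rfl
end

section
/- Fix an integer N > 1. Let (S₁,…,S_N) be an mKdV tuple of subsets with (S₁,…,S_N) ≠ (ℤ≥0,…,ℤ≥0), and for each i let λ^i be the partition corresponding to S_i. Then there exists an index i ∈ {1,…,N} such that 2|λ^i| > |λ^{i+1}| + |λ^{i−1}| + 1, where the indices are taken modulo N (so λ^0 = λ^N and λ^{N+1} = λ^1). -/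
/-- The increasing enumeration `s₀ < s₁ < s₂ < …` of a set `S ⊆ ℤ`, when it exists
(it exists and is unique for any set of virtual cardinal zero); junk value otherwise. -/
noncomputable def enumOf (S : Set ℤ) : ℕ → ℤ :=
  letI := Classical.propDecidable (∃ f : ℕ → ℤ, StrictMono f ∧ Set.range f = S)
  if h : ∃ f : ℕ → ℤ, StrictMono f ∧ Set.range f = S then h.choose else fun _ => 0

/-- The weight `|λ| = ∑_i λ_i` of the partition `λ_i = i − s_i` associated to a subset
`S = {s₀ < s₁ < …} ⊆ ℤ` of virtual cardinal zero. -/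
noncomputable def vczWeight (S : Set ℤ) : ℤ :=
  ∑ᶠ i : ℕ, ((i : ℤ) - enumOf S i)

lemma strictMono_range_unique {f g : ℕ → ℤ} (hf : StrictMono f) (hg : StrictMono g)
    (h : Set.range f = Set.range g) : f = g := by
  have key : ∀ (a b : ℕ → ℤ), StrictMono a → StrictMono b → Set.range a = Set.range b →
      ∀ n, (∀ m < n, a m = b m) → a n ≤ b n := by
    intro a b ha hb hr n ih
    have : b n ∈ Set.range a := hr ▸ Set.mem_range_self n
    obtain ⟨m, hm⟩ := this
    rcases lt_or_ge m n with hmn | hmn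
    · have h1 : a m = b m := ih m hmn
      have h2 : b m < b n := hb hmn
      omega
    · exact hm ▸ ha.monotone hmn
  funext n
  induction n using Nat.strong_induction_on with
  | _ n ih =>
    exact le_antisymm (key f g hf hg h n ih)
      (key g f hg hf h.symm n fun m hm => (ih m hm).symm)


noncomputable def fsum (A : Set ℤ) : ℤ := ∑ᶠ j ∈ A, j

noncomputable def Wsum (S : Set ℤ) : ℤ :=
  fsum ({n : ℤ | 0 ≤ n} \ S) - fsum (S \ {n : ℤ | 0 ≤ n})

lemma fsum_insert {A : Set ℤ} {b : ℤ} (hb : b ∉ A) (hA : A.Finite) :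
    fsum (insert b A) = b + fsum A :=
  finsum_mem_insert _ hb hA

lemma fsum_const_one {A : Set ℤ} (hA : A.Finite) : (∑ᶠ j ∈ A, (1:ℤ)) = A.ncard := by
  rw [← hA.coe_toFinset, finsum_mem_coe_finset, Finset.sum_const]
  simp [Set.ncard_coe_finset, Set.ncard_eq_toFinset_card A hA]

lemma fsum_image_add_one {A : Set ℤ} (hA : A.Finite) :
    fsum ((fun s => s + 1) '' A) = fsum A + A.ncard := by
  have hinj : Set.InjOn (fun s : ℤ => s + 1) A := fun a _ b _ h => by simpa using h
  rw [fsum, finsum_mem_image hinj, finsum_mem_add_distrib hA, fsum_const_one hA]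
  rfl

lemma fsum_Ico (M : ℕ) : fsum (Set.Ico (0:ℤ) (M:ℤ)) = ∑ n ∈ Finset.range M, (n:ℤ) := by
  induction M with
  | zero => simp [fsum]
  | succ k ih =>
    have h1 : Set.Ico (0:ℤ) ((k+1:ℕ):ℤ) = insert (k:ℤ) (Set.Ico 0 (k:ℤ)) := by
      ext x; simp only [Set.mem_Ico, Set.mem_insert_iff]; push_cast; omega
    rw [h1, fsum_insert (by simp) (Set.finite_Ico _ _), ih, Finset.sum_range_succ]; ring

lemma ncard_Ico (M : ℕ) : (Set.Ico (0:ℤ) (M:ℤ)).ncard = M := by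
  induction M with
  | zero => simp
  | succ k ih =>
    have h1 : Set.Ico (0:ℤ) ((k+1:ℕ):ℤ) = insert (k:ℤ) (Set.Ico 0 (k:ℤ)) := by
      ext x; simp only [Set.mem_Ico, Set.mem_insert_iff]; push_cast; omega
    rw [h1, Set.ncard_insert_of_notMem (by simp) (Set.finite_Ico _ _), ih]


lemma mem_shift {S : Set ℤ} {k x : ℤ} : x ∈ shiftSet S k ↔ x - k ∈ S := by
  constructor
  · rintro ⟨s, hs, rfl⟩; simpa using hs
  · intro h; exact ⟨x - k, h, by ring⟩

lemma shift1 {S : Set ℤ} (h1 : (S \ {n : ℤ | 0 ≤ n}).Finite)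
    (h2 : ({n : ℤ | 0 ≤ n} \ S).Finite) :
    (shiftSet S 1 \ {n : ℤ | 0 ≤ n}).Finite ∧ ({n : ℤ | 0 ≤ n} \ shiftSet S 1).Finite ∧
    Wsum (shiftSet S 1) = Wsum S + ({n : ℤ | 0 ≤ n} \ S).ncard - (S \ {n : ℤ | 0 ≤ n}).ncard ∧
    (({n : ℤ | 0 ≤ n} \ shiftSet S 1).ncard : ℤ) =
      ((shiftSet S 1 \ {n : ℤ | 0 ≤ n}).ncard : ℤ) + 1
        + ({n : ℤ | 0 ≤ n} \ S).ncard - (S \ {n : ℤ | 0 ≤ n}).ncard := by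
  have hinj : Function.Injective (fun s : ℤ => s + 1) := fun a b h => by simpa using h
  have imgA : shiftSet S 1 \ {n : ℤ | 0 ≤ n} = (fun s => s + 1) '' (S \ {n : ℤ | -1 ≤ n}) := by
    ext x
    simp only [Set.mem_diff, Set.mem_setOf_eq, mem_shift, Set.mem_image]
    constructor
    · rintro ⟨hx, hx0⟩; exact ⟨x - 1, ⟨hx, by omega⟩, by ring⟩
    · rintro ⟨s, ⟨hs, hs0⟩, rfl⟩; exact ⟨by simpa using hs, by omega⟩
  have imgB : {n : ℤ | 0 ≤ n} \ shiftSet S 1 = (fun s => s + 1) '' ({n : ℤ | -1 ≤ n} \ S) := by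
    ext x
    simp only [Set.mem_diff, Set.mem_setOf_eq, mem_shift, Set.mem_image]
    constructor
    · rintro ⟨hx0, hx⟩; exact ⟨x - 1, ⟨by omega, hx⟩, by ring⟩
    · rintro ⟨s, ⟨hs0, hs⟩, rfl⟩; exact ⟨by omega, by simpa using hs⟩
  by_cases hc : (-1 : ℤ) ∈ S
  · have e1 : S \ {n : ℤ | 0 ≤ n} = insert (-1) (S \ {n : ℤ | -1 ≤ n}) := by
      ext x
      simp only [Set.mem_diff, Set.mem_setOf_eq, Set.mem_insert_iff]
      constructor
      · rintro ⟨hx, hx0⟩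
        rcases eq_or_ne x (-1) with rfl | hxne
        · exact Or.inl rfl
        · exact Or.inr ⟨hx, by omega⟩
      · rintro (rfl | ⟨hx, hx0⟩)
        · exact ⟨hc, by omega⟩
        · exact ⟨hx, by omega⟩
    have e2 : {n : ℤ | -1 ≤ n} \ S = {n : ℤ | 0 ≤ n} \ S := by
      ext x
      simp only [Set.mem_diff, Set.mem_setOf_eq]
      constructor
      · rintro ⟨hx0, hx⟩
        refine ⟨?_, hx⟩
        rcases eq_or_ne x (-1) with rfl | hxne
        · exact absurd hc hx
        · omega
      · rintro ⟨hx0, hx⟩; exact ⟨by omega, hx⟩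
    have hnm : (-1 : ℤ) ∉ S \ {n : ℤ | -1 ≤ n} := by simp
    have hfinQ : (S \ {n : ℤ | -1 ≤ n}).Finite := by
      apply h1.subset
      intro x hx
      exact ⟨hx.1, by simp at hx ⊢; omega⟩
    have hsum1 : fsum (S \ {n : ℤ | 0 ≤ n}) = -1 + fsum (S \ {n : ℤ | -1 ≤ n}) := by
      rw [e1, fsum_insert hnm hfinQ]
    have hcard1 : (S \ {n : ℤ | 0 ≤ n}).ncard = (S \ {n : ℤ | -1 ≤ n}).ncard + 1 := by
      rw [e1, Set.ncard_insert_of_notMem hnm hfinQ]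
    refine ⟨imgA ▸ hfinQ.image _, imgB ▸ (e2 ▸ h2).image _, ?_, ?_⟩
    · rw [Wsum, Wsum, imgA, imgB, e2, fsum_image_add_one hfinQ, fsum_image_add_one h2]
      have hc1 : ((S \ {n : ℤ | 0 ≤ n}).ncard : ℤ) = ((S \ {n : ℤ | -1 ≤ n}).ncard : ℤ) + 1 := by
        exact_mod_cast hcard1
      linarith [hsum1]
    · rw [imgA, imgB, e2, Set.ncard_image_of_injective _ hinj,
        Set.ncard_image_of_injective _ hinj]
      omega
  · have e1 : S \ {n : ℤ | -1 ≤ n} = S \ {n : ℤ | 0 ≤ n} := by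
      ext x
      simp only [Set.mem_diff, Set.mem_setOf_eq]
      constructor
      · rintro ⟨hx, hx0⟩; exact ⟨hx, by omega⟩
      · rintro ⟨hx, hx0⟩
        refine ⟨hx, ?_⟩
        rcases eq_or_ne x (-1) with rfl | hxne
        · exact absurd hx hc
        · omega
    have e2 : {n : ℤ | -1 ≤ n} \ S = insert (-1) ({n : ℤ | 0 ≤ n} \ S) := by
      ext x
      simp only [Set.mem_diff, Set.mem_setOf_eq, Set.mem_insert_iff]
      constructor
      · rintro ⟨hx0, hx⟩
        rcases eq_or_ne x (-1) with rfl | hxne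
        · exact Or.inl rfl
        · exact Or.inr ⟨by omega, hx⟩
      · rintro (rfl | ⟨hx0, hx⟩)
        · exact ⟨by omega, hc⟩
        · exact ⟨by omega, hx⟩
    have hnm : (-1 : ℤ) ∉ {n : ℤ | 0 ≤ n} \ S := by simp
    have hfinQ : ({n : ℤ | -1 ≤ n} \ S).Finite := by rw [e2]; exact h2.insert _
    have hsum2 : fsum ({n : ℤ | -1 ≤ n} \ S) = -1 + fsum ({n : ℤ | 0 ≤ n} \ S) := by
      rw [e2, fsum_insert hnm h2]
    have hcard2 : ({n : ℤ | -1 ≤ n} \ S).ncard = ({n : ℤ | 0 ≤ n} \ S).ncard + 1 := by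
      rw [e2, Set.ncard_insert_of_notMem hnm h2]
    refine ⟨imgA ▸ (e1 ▸ h1).image _, imgB ▸ hfinQ.image _, ?_, ?_⟩
    · rw [Wsum, Wsum, imgA, imgB, e1, fsum_image_add_one h1, fsum_image_add_one hfinQ]
      push_cast [hsum2, hcard2]
      ring
    · rw [imgA, imgB, e1, Set.ncard_image_of_injective _ hinj,
        Set.ncard_image_of_injective _ hinj]
      omega

lemma step {S S' : Set ℤ} (hS : VirtualCardZero S) (hS' : VirtualCardZero S')
    (hsub : shiftSet S 1 ⊆ S') :
    ∃ b : ℤ, b ∉ shiftSet S 1 ∧ S' = insert b (shiftSet S 1) ∧ Wsum S' = Wsum S - b := by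
  obtain ⟨hS1, hS2, hS3⟩ := hS
  obtain ⟨hS1', hS2', hS3'⟩ := hS'
  obtain ⟨hX1, hX2, hW, hν⟩ := shift1 hS1 hS2
  set X := shiftSet S 1 with hX
  have hWX : Wsum X = Wsum S := by omega
  have hνX : ({n : ℤ | 0 ≤ n} \ X).ncard = (X \ {n : ℤ | 0 ≤ n}).ncard + 1 := by omega
  -- decompose S' \ X
  have hd1 : (S' \ X) \ {n : ℤ | 0 ≤ n} = (S' \ {n : ℤ | 0 ≤ n}) \ (X \ {n : ℤ | 0 ≤ n}) := by
    ext x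
    simp only [Set.mem_diff, Set.mem_setOf_eq]
    constructor
    · rintro ⟨⟨ha, hb⟩, hcc⟩; exact ⟨⟨ha, hcc⟩, fun h => hb h.1⟩
    · rintro ⟨⟨ha, hcc⟩, hb⟩; exact ⟨⟨ha, fun h => hb ⟨h, hcc⟩⟩, hcc⟩
  have hd2 : (S' \ X) ∩ {n : ℤ | 0 ≤ n} =
      ({n : ℤ | 0 ≤ n} \ X) \ ({n : ℤ | 0 ≤ n} \ S') := by
    ext x
    simp only [Set.mem_inter_iff, Set.mem_diff, Set.mem_setOf_eq]
    constructor
    · rintro ⟨⟨ha, hb⟩, hcc⟩; exact ⟨⟨hcc, hb⟩, fun h => h.2 ha⟩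
    · rintro ⟨⟨hcc, hb⟩, h⟩
      refine ⟨⟨?_, hb⟩, hcc⟩
      by_contra ha
      exact h ⟨hcc, ha⟩
  have hsub1 : X \ {n : ℤ | 0 ≤ n} ⊆ S' \ {n : ℤ | 0 ≤ n} := fun x hx => ⟨hsub hx.1, hx.2⟩
  have hsub2 : {n : ℤ | 0 ≤ n} \ S' ⊆ {n : ℤ | 0 ≤ n} \ X := fun x hx =>
    ⟨hx.1, fun h => hx.2 (hsub h)⟩
  have hcard_d1 : ((S' \ X) \ {n : ℤ | 0 ≤ n}).ncard =
      (S' \ {n : ℤ | 0 ≤ n}).ncard - (X \ {n : ℤ | 0 ≤ n}).ncard := by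
    rw [hd1, Set.ncard_diff hsub1 hX1]
  have hcard_d2 : ((S' \ X) ∩ {n : ℤ | 0 ≤ n}).ncard =
      ({n : ℤ | 0 ≤ n} \ X).ncard - ({n : ℤ | 0 ≤ n} \ S').ncard := by
    rw [hd2, Set.ncard_diff hsub2 hS2']
  have hle1 : (X \ {n : ℤ | 0 ≤ n}).ncard ≤ (S' \ {n : ℤ | 0 ≤ n}).ncard :=
    Set.ncard_le_ncard hsub1 hS1'
  have hle2 : ({n : ℤ | 0 ≤ n} \ S').ncard ≤ ({n : ℤ | 0 ≤ n} \ X).ncard :=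
    Set.ncard_le_ncard hsub2 hX2
  have hfin_d1 : ((S' \ X) \ {n : ℤ | 0 ≤ n}).Finite := hd1 ▸ hS1'.subset Set.diff_subset
  have hfin_d2 : ((S' \ X) ∩ {n : ℤ | 0 ≤ n}).Finite := hd2 ▸ hX2.subset Set.diff_subset
  have hsplit : S' \ X = ((S' \ X) \ {n : ℤ | 0 ≤ n}) ∪ ((S' \ X) ∩ {n : ℤ | 0 ≤ n}) := by
    ext x
    simp only [Set.mem_union, Set.mem_diff, Set.mem_inter_iff, Set.mem_setOf_eq]
    tauto
  have hdisj : Disjoint ((S' \ X) \ {n : ℤ | 0 ≤ n}) ((S' \ X) ∩ {n : ℤ | 0 ≤ n}) := by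
    rw [Set.disjoint_left]
    rintro x ⟨_, hx0⟩ ⟨_, hx1⟩
    exact hx0 hx1
  have hfinSX : (S' \ X).Finite := hsplit ▸ hfin_d1.union hfin_d2
  have hcardSX : (S' \ X).ncard = 1 := by
    rw [hsplit, Set.ncard_union_eq hdisj hfin_d1 hfin_d2, hcard_d1, hcard_d2]
    omega
  obtain ⟨b, hb⟩ := Set.ncard_eq_one.1 hcardSX
  have hbSX : b ∈ S' \ X := by rw [hb]; exact Set.mem_singleton b
  have hbX : b ∉ X := hbSX.2
  have hbS' : b ∈ S' := hbSX.1
  have hS'eq : S' = insert b X := by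
    ext x
    simp only [Set.mem_insert_iff]
    constructor
    · intro hx
      by_cases hxX : x ∈ X
      · exact Or.inr hxX
      · have : x ∈ S' \ X := ⟨hx, hxX⟩
        rw [hb] at this
        exact Or.inl this
    · rintro (rfl | hx)
      · exact hbS'
      · exact hsub hx
  refine ⟨b, hbX, hS'eq, ?_⟩
  rw [← hWX]
  by_cases hb0 : (0:ℤ) ≤ b
  · have e1 : S' \ {n : ℤ | 0 ≤ n} = X \ {n : ℤ | 0 ≤ n} := by
      rw [hS'eq]
      ext x
      simp only [Set.mem_diff, Set.mem_insert_iff, Set.mem_setOf_eq]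
      constructor
      · rintro ⟨rfl | hx, h0⟩
        · omega
        · exact ⟨hx, h0⟩
      · rintro ⟨hx, h0⟩; exact ⟨Or.inr hx, h0⟩
    have e2 : {n : ℤ | 0 ≤ n} \ X = insert b ({n : ℤ | 0 ≤ n} \ S') := by
      rw [hS'eq]
      ext x
      simp only [Set.mem_diff, Set.mem_insert_iff, Set.mem_setOf_eq]
      constructor
      · rintro ⟨h0, hx⟩
        rcases eq_or_ne x b with rfl | hne
        · exact Or.inl rfl
        · exact Or.inr ⟨h0, by tauto⟩
      · rintro (rfl | ⟨h0, hx⟩)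
        · exact ⟨hb0, hbX⟩
        · exact ⟨h0, fun h => hx (Or.inr h)⟩
    have hnm : b ∉ {n : ℤ | 0 ≤ n} \ S' := by
      intro h
      exact h.2 (hS'eq ▸ Set.mem_insert b X)
    rw [Wsum, Wsum, e1, e2, fsum_insert hnm hS2'] at *
    ring
  · have e1 : S' \ {n : ℤ | 0 ≤ n} = insert b (X \ {n : ℤ | 0 ≤ n}) := by
      rw [hS'eq]
      ext x
      simp only [Set.mem_diff, Set.mem_insert_iff, Set.mem_setOf_eq]
      constructor
      · rintro ⟨rfl | hx, h0⟩
        · exact Or.inl rfl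
        · exact Or.inr ⟨hx, h0⟩
      · rintro (rfl | ⟨hx, h0⟩)
        · exact ⟨Or.inl rfl, hb0⟩
        · exact ⟨Or.inr hx, h0⟩
    have e2 : {n : ℤ | 0 ≤ n} \ S' = {n : ℤ | 0 ≤ n} \ X := by
      rw [hS'eq]
      ext x
      simp only [Set.mem_diff, Set.mem_insert_iff, Set.mem_setOf_eq]
      constructor
      · rintro ⟨h0, hx⟩; exact ⟨h0, fun h => hx (Or.inr h)⟩
      · rintro ⟨h0, hx⟩
        refine ⟨h0, ?_⟩
        rintro (rfl | h)
        · omega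
        · exact hx h
    have hnmb : b ∉ X \ {n : ℤ | 0 ≤ n} := fun h => hbX h.1
    rw [Wsum, Wsum, e1, e2, fsum_insert hnmb hX1]
    ring

lemma vczWeight_eq {S : Set ℤ} (h : VirtualCardZero S) : vczWeight S = Wsum S := by
  classical
  obtain ⟨h1, h2, h3⟩ := h
  obtain ⟨B, hB⟩ := h2.bddAbove
  set M : ℕ := (B + 1).toNat with hM
  have hMP : ∀ x ∈ {n : ℤ | 0 ≤ n} \ S, x < (M : ℤ) := by
    intro x hx; have := hB hx; simp only [hM]; omega
  have hIci : ∀ x : ℤ, (M:ℤ) ≤ x → x ∈ S := by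
    intro x hx
    by_contra hxS
    have hx0 : (0:ℤ) ≤ x := le_trans (Int.ofNat_nonneg M) hx
    have := hMP x ⟨hx0, hxS⟩; omega
  set F : Set ℤ := S ∩ Set.Iio (M:ℤ) with hF
  have hsplit : F = (S \ {n : ℤ | 0 ≤ n}) ∪ (S ∩ Set.Ico 0 (M:ℤ)) := by
    ext x
    simp only [hF, Set.mem_inter_iff, Set.mem_Iio, Set.mem_union, Set.mem_diff,
      Set.mem_setOf_eq, Set.mem_Ico]
    constructor
    · rintro ⟨hxS, hxM⟩
      rcases le_or_gt 0 x with h0 | h0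
      · exact Or.inr ⟨hxS, h0, hxM⟩
      · exact Or.inl ⟨hxS, by omega⟩
    · rintro (⟨hxS, hx0⟩ | ⟨hxS, _, hxM⟩)
      · exact ⟨hxS, by have : (0:ℤ) ≤ (M:ℤ) := Int.ofNat_nonneg M; omega⟩
      · exact ⟨hxS, hxM⟩
  have hfinIco : (S ∩ Set.Ico 0 (M:ℤ)).Finite := (Set.finite_Ico (0:ℤ) (M:ℤ)).subset Set.inter_subset_right
  have hFfin : F.Finite := by rw [hsplit]; exact h1.union hfinIco
  have hdisj1 : Disjoint (S \ {n : ℤ | 0 ≤ n}) (S ∩ Set.Ico 0 (M:ℤ)) := by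
    rw [Set.disjoint_left]
    rintro x ⟨_, hx0⟩ ⟨_, hx1, _⟩
    exact hx0 hx1
  have hpart : Set.Ico (0:ℤ) (M:ℤ) = (S ∩ Set.Ico 0 (M:ℤ)) ∪ ({n : ℤ | 0 ≤ n} \ S) := by
    ext x
    simp only [Set.mem_Ico, Set.mem_union, Set.mem_inter_iff, Set.mem_diff, Set.mem_setOf_eq]
    constructor
    · rintro ⟨hx0, hxM⟩
      by_cases hxS : x ∈ S
      · exact Or.inl ⟨hxS, hx0, hxM⟩
      · exact Or.inr ⟨hx0, hxS⟩
    · rintro (⟨_, hx⟩ | hx)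
      · exact hx
      · exact ⟨hx.1, hMP x hx⟩
  have hdisj2 : Disjoint (S ∩ Set.Ico 0 (M:ℤ)) ({n : ℤ | 0 ≤ n} \ S) := by
    rw [Set.disjoint_left]
    rintro x ⟨hxS, _⟩ ⟨_, hxS'⟩
    exact hxS' hxS
  have hcardIco : (S ∩ Set.Ico 0 (M:ℤ)).ncard + ({n : ℤ | 0 ≤ n} \ S).ncard = M := by
    rw [← Set.ncard_union_eq hdisj2 hfinIco h2, ← hpart, ncard_Ico]
  have hFcard : F.ncard = M := by
    rw [hsplit, Set.ncard_union_eq hdisj1 h1 hfinIco]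
    omega
  set Ffin := hFfin.toFinset with hFf
  have hFcard' : Ffin.card = M := by
    rw [hFf, ← Set.ncard_eq_toFinset_card F hFfin]; exact hFcard
  set e := Ffin.orderIsoOfFin hFcard' with he
  set f : ℕ → ℤ := fun n => if h : n < M then (e ⟨n, h⟩ : ℤ) else (n : ℤ) with hfdef
  have hfF : ∀ (n : ℕ) (hn : n < M), f n ∈ F := by
    intro n hn
    have : (e ⟨n, hn⟩ : ℤ) ∈ Ffin := (e ⟨n, hn⟩).2
    have hmem : (e ⟨n, hn⟩ : ℤ) ∈ F := hFfin.mem_toFinset.1 this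
    simpa [hfdef, dif_pos hn] using hmem
  have hfn : ∀ (n : ℕ), ¬ n < M → f n = n := by
    intro n hn; simp [hfdef, dif_neg hn]
  have hmono : StrictMono f := by
    intro a b hab
    by_cases ha : a < M <;> by_cases hb' : b < M
    · have hlt : (⟨a, ha⟩ : Fin M) < ⟨b, hb'⟩ := hab
      have := e.strictMono hlt
      simpa [hfdef, dif_pos ha, dif_pos hb', Subtype.coe_lt_coe] using this
    · have h1 := hfF a ha
      have h2 : f a < (M:ℤ) := h1.2
      have h3 : f b = b := hfn b hb'
      rw [h3]; omega
    · omega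
    · rw [hfn a ha, hfn b hb']; exact_mod_cast hab
  have hrange : Set.range f = S := by
    ext x
    constructor
    · rintro ⟨n, rfl⟩
      by_cases hn : n < M
      · exact (hfF n hn).1
      · rw [hfn n hn]; exact hIci _ (by exact_mod_cast Nat.le_of_not_lt hn)
    · intro hx
      by_cases hxM : x < (M:ℤ)
      · have hxF : x ∈ Ffin := hFfin.mem_toFinset.2 ⟨hx, hxM⟩
        obtain ⟨k, hk⟩ := e.surjective ⟨x, hxF⟩
        refine ⟨k.val, ?_⟩
        have : f k.val = (e ⟨k.val, k.isLt⟩ : ℤ) := by simp [hfdef, dif_pos k.isLt]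
        rw [this, Fin.eta, hk]
      · refine ⟨x.toNat, ?_⟩
        have hxM' : ¬ x.toNat < M := by omega
        rw [hfn _ hxM']; omega
  have hex : ∃ g : ℕ → ℤ, StrictMono g ∧ Set.range g = S := ⟨f, hmono, hrange⟩
  have henum : enumOf S = f := by
    unfold enumOf
    rw [dif_pos hex]
    exact strictMono_range_unique hex.choose_spec.1 hmono (hex.choose_spec.2.trans hrange.symm)
  rw [vczWeight, henum]
  have hsupp : Function.support (fun n : ℕ => (n:ℤ) - f n) ⊆ ↑(Finset.range M) := by
    intro n hn
    simp only [Finset.coe_range, Set.mem_Iio]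
    by_contra hc
    have : f n = n := hfn n hc
    simp [Function.mem_support, this] at hn
  rw [finsum_eq_sum_of_support_subset _ hsupp, Finset.sum_sub_distrib]
  have hsumf : ∑ n ∈ Finset.range M, f n = fsum F := by
    have e1 : fsum F = ∑ x ∈ Ffin, x := by
      rw [fsum, ← hFfin.coe_toFinset, finsum_mem_coe_finset]
    have e2 : ∑ n ∈ Finset.range M, f n = ∑ k : Fin M, f k.val :=
      (Fin.sum_univ_eq_sum_range f M).symm
    have e3 : ∑ k : Fin M, f k.val = ∑ k : Fin M, (e k : ℤ) := by
      apply Finset.sum_congr rfl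
      intro k _
      simp [hfdef, dif_pos k.isLt]
    have e4 : ∑ k : Fin M, (e k : ℤ) = ∑ x : Ffin, (x : ℤ) :=
      Fintype.sum_equiv e.toEquiv _ _ (fun k => rfl)
    rw [e1, e2, e3, e4]
    exact Finset.sum_coe_sort Ffin (fun x : ℤ => x)
  have hFsum : fsum F = fsum (S \ {n : ℤ | 0 ≤ n}) + fsum (S ∩ Set.Ico 0 (M:ℤ)) := by
    rw [hsplit]; exact finsum_mem_union hdisj1 h1 hfinIco
  have hIcoSum : fsum (Set.Ico (0:ℤ) (M:ℤ)) =
      fsum (S ∩ Set.Ico 0 (M:ℤ)) + fsum ({n : ℤ | 0 ≤ n} \ S) := by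
    conv_lhs => rw [hpart]
    exact finsum_mem_union hdisj2 hfinIco h2
  rw [hsumf, Wsum, ← fsum_Ico M]
  linarith


open Fin.NatCast Fin.CommRing in
lemma mkdv_chain {N : ℕ} [NeZero N] {T : Fin N → Set ℤ} (hT : IsMKdVTuple N T) :
    ∀ (k : ℕ) (i : Fin N) (x : ℤ), x ∈ T i → x + (k : ℤ) ∈ T (i + (k : Fin N)) := by
  intro k
  induction k with
  | zero => intro i x hx; simpa using hx
  | succ k ih =>
    intro i x hx
    have h1 : x + (k : ℤ) ∈ T (i + (k : Fin N)) := ih i x hx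
    have h2 : (x + (k : ℤ)) + 1 ∈ T (i + (k : Fin N) + 1) :=
      hT.2 _ ⟨x + (k : ℤ), h1, rfl⟩
    have e1 : i + ((k + 1 : ℕ) : Fin N) = i + (k : Fin N) + 1 := by
      push_cast
      ring
    have e2 : x + ((k + 1 : ℕ) : ℤ) = (x + (k : ℤ)) + 1 := by push_cast; ring
    rw [e1, e2]
    exact h2

lemma mkdv_all_zero {N : ℕ} [NeZero N] (hN : 1 < N) {T : Fin N → Set ℤ}
    (hT : IsMKdVTuple N T) (h0 : ∀ i : Fin N, (0 : ℤ) ∉ shiftSet (T i) 1) :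
    ∀ i, T i = {n : ℤ | 0 ≤ n} := by
  have hm1 : ∀ i : Fin N, (-1 : ℤ) ∉ T i := by
    intro i h
    exact h0 i ⟨-1, h, by ring⟩
  have nonneg : ∀ (i : Fin N) (x : ℤ), x ∈ T i → 0 ≤ x := by
    intro i x hx
    by_contra hneg
    push_neg at hneg
    -- x + m*N stays in T i
    have hmult : ∀ m : ℕ, x + (m : ℤ) * (N : ℤ) ∈ T i := by
      intro m
      induction m with
      | zero => simpa using hx
      | succ m ih =>
        have := (hT.1 i).2 ⟨x + (m : ℤ) * (N : ℤ), ih, rfl⟩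
        have e : x + ((m + 1 : ℕ) : ℤ) * (N : ℤ) = x + (m : ℤ) * (N : ℤ) + (N : ℤ) := by
          push_cast; ring
        rw [e]
        exact this
    have hNpos : (0 : ℤ) < (N : ℤ) := by exact_mod_cast Nat.lt_of_lt_of_le Nat.zero_lt_one hN.le
    set q : ℤ := (-1 - x) / (N : ℤ) with hq
    have hq0 : 0 ≤ q := Int.ediv_nonneg (by omega) (le_of_lt hNpos)
    have hmod := Int.emod_emod_of_dvd
    have hdiv : (-1 - x) = (N : ℤ) * q + (-1 - x) % (N : ℤ) := (Int.mul_ediv_add_emod _ _).symm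
    have hmod0 : 0 ≤ (-1 - x) % (N : ℤ) := Int.emod_nonneg _ (by omega)
    have hmodN : (-1 - x) % (N : ℤ) < (N : ℤ) := Int.emod_lt_of_pos _ hNpos
    have hcomm : (N : ℤ) * q = q * (N : ℤ) := mul_comm _ _
    set y : ℤ := x + q * (N : ℤ) with hy
    have hy1 : -(N : ℤ) ≤ y ∧ y ≤ -1 := by constructor <;> omega
    have hyT : y ∈ T i := by
      have := hmult q.toNat
      rwa [show ((q.toNat : ℤ)) = q by omega] at this
    set k : ℕ := (-1 - y).toNat with hk
    have hky : (k : ℤ) = -1 - y := by omega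
    have := mkdv_chain hT k i y hyT
    rw [show y + (k : ℤ) = -1 by omega] at this
    exact hm1 _ this
  intro i
  obtain ⟨f1, f2, f3⟩ := (hT.1 i).1
  have hTP : T i \ {n : ℤ | 0 ≤ n} = ∅ := by
    ext x
    simp only [Set.mem_diff, Set.mem_setOf_eq, Set.mem_empty_iff_false, iff_false]
    rintro ⟨hx, hx0⟩
    exact hx0 (nonneg i x hx)
  have hPT : {n : ℤ | 0 ≤ n} \ T i = ∅ := by
    rw [← Set.ncard_eq_zero f2, ← f3, hTP]
    simp
  ext x
  constructor
  · intro hx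
    exact nonneg i x hx
  · intro hx
    by_contra hxT
    have : x ∈ {n : ℤ | 0 ≤ n} \ T i := ⟨hx, hxT⟩
    rw [hPT] at this
    exact this


lemma cyc_all_zero {N : ℕ} [NeZero N] (hN : 1 < N) (b : Fin N → ℤ)
    (key' : ∀ i : Fin N, b (i + 1) ≤ b i + 1)
    (hdist : ∀ (j : ℕ) (hj : j + 1 < N) (hj' : j < N),
      b (⟨j + 1, hj⟩ : Fin N) ≠ b (⟨j, hj'⟩ : Fin N) + 1)
    (hsum : ∑ i : Fin N, b i = 0) :
    ∀ i : Fin N, b i = 0 := by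
  have p0 : 0 < N := by omega
  have pL : N - 1 < N := by omega
  have hone : ((1 : Fin N) : ℕ) = 1 := by
    rw [Fin.val_one']
    exact Nat.mod_eq_of_lt hN
  have hfin_succ : ∀ (j : ℕ) (hj : j + 1 < N) (hj' : j < N),
      (⟨j, hj'⟩ : Fin N) + 1 = (⟨j + 1, hj⟩ : Fin N) := by
    intro j hj hj'
    apply Fin.ext
    rw [Fin.val_add, hone]
    show (j + 1) % N = j + 1
    exact Nat.mod_eq_of_lt hj
  have hfin_wrap : (⟨N - 1, pL⟩ : Fin N) + 1 = (0 : Fin N) := by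
    apply Fin.ext
    rw [Fin.val_add, hone]
    show (N - 1 + 1) % N = 0
    have hh : N - 1 + 1 = N := by omega
    rw [hh, Nat.mod_self]
  have hmono : ∀ (j : ℕ) (hj : j < N) (i : ℕ), i ≤ j → ∀ (hi : i < N),
      b ⟨j, hj⟩ ≤ b ⟨i, hi⟩ := by
    intro j
    induction j with
    | zero =>
      intro hj i hij hi
      have : i = 0 := by omega
      subst this
      exact le_refl _
    | succ j ih =>
      intro hj i hij hi
      have hj' : j < N := by omega
      have hstep1 : b ⟨j + 1, hj⟩ ≤ b ⟨j, hj'⟩ := by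
        have h1 := key' ⟨j, hj'⟩
        rw [hfin_succ j hj hj'] at h1
        have h2 := hdist j hj hj'
        omega
      rcases Nat.eq_or_lt_of_le hij with heq | hlt
      · subst heq
        exact le_refl _
      · exact le_trans hstep1 (ih hj' i (by omega) hi)
  have hub : ∀ i : Fin N, b i ≤ b ⟨0, p0⟩ := fun i =>
    hmono i.val i.isLt 0 (Nat.zero_le _) p0
  have hlb : ∀ i : Fin N, b ⟨N - 1, pL⟩ ≤ b i := fun i =>
    hmono (N - 1) pL i.val (by omega) i.isLt
  have hwrap : b ⟨0, p0⟩ ≤ b ⟨N - 1, pL⟩ + 1 := by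
    have h1 := key' ⟨N - 1, pL⟩
    rw [hfin_wrap] at h1
    exact h1
  have hNpos : (0 : ℤ) < (N : ℤ) := by exact_mod_cast Nat.lt_of_lt_of_le Nat.zero_lt_one hN.le
  have hNm : (N : ℤ) * b ⟨N - 1, pL⟩ ≤ 0 := by
    calc (N : ℤ) * b ⟨N - 1, pL⟩
        = ∑ _i : Fin N, b ⟨N - 1, pL⟩ := by
          rw [Finset.sum_const, Finset.card_univ, Fintype.card_fin, nsmul_eq_mul]
      _ ≤ ∑ i : Fin N, b i := Finset.sum_le_sum (fun i _ => hlb i)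
      _ = 0 := hsum
  have hNM : 0 ≤ (N : ℤ) * b ⟨0, p0⟩ := by
    calc (0 : ℤ) = ∑ i : Fin N, b i := hsum.symm
      _ ≤ ∑ _i : Fin N, b ⟨0, p0⟩ := Finset.sum_le_sum (fun i _ => hub i)
      _ = (N : ℤ) * b ⟨0, p0⟩ := by
          rw [Finset.sum_const, Finset.card_univ, Fintype.card_fin, nsmul_eq_mul]
  have hm0 : b ⟨N - 1, pL⟩ ≤ 0 := by nlinarith
  have hM0 : 0 ≤ b ⟨0, p0⟩ := by nlinarith
  rcases eq_or_lt_of_le hm0 with hmeq | hmlt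
  · intro i
    have h1 : ∀ j ∈ Finset.univ, (0 : ℤ) ≤ b j := fun j _ => hmeq ▸ hlb j
    exact (Finset.sum_eq_zero_iff_of_nonneg h1).1 hsum i (Finset.mem_univ i)
  · have hM0' : b ⟨0, p0⟩ ≤ 0 := by linarith [hwrap]
    intro i
    have h1 : ∀ j ∈ Finset.univ, b j ≤ 0 := fun j _ => le_trans (hub j) hM0'
    exact (Finset.sum_eq_zero_iff_of_nonpos h1).1 hsum i (Finset.mem_univ i)

/-- Fix `N > 1`.  Let `(S₁,…,S_N)` be an mKdV tuple of subsets
different from `(ℤ≥0,…,ℤ≥0)`, and let `λ^i` be the partition corresponding to `S_i`.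
Then there is an index `i` (indices modulo `N`) with
`2|λ^i| > |λ^{i+1}| + |λ^{i−1}| + 1`. -/
theorem mkdv_exists_degree_decreasing_index (N : ℕ) [NeZero N] (hN : 1 < N)
    (T : Fin N → Set ℤ) (hT : IsMKdVTuple N T)
    (hne : T ≠ fun _ => {n : ℤ | 0 ≤ n}) :
    ∃ i : Fin N,
      2 * vczWeight (T i) > vczWeight (T (i + 1)) + vczWeight (T (i - 1)) + 1 := by
  by_contra hcon
  push_neg at hcon
  have hvcz : ∀ i, VirtualCardZero (T i) := fun i => (hT.1 i).1
  have hWeq : ∀ i, vczWeight (T i) = Wsum (T i) := fun i => vczWeight_eq (hvcz i)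
  have hstep : ∀ i : Fin N, ∃ b : ℤ, b ∉ shiftSet (T i) 1 ∧
      T (i + 1) = insert b (shiftSet (T i) 1) ∧ Wsum (T (i + 1)) = Wsum (T i) - b :=
    fun i => step (hvcz i) (hvcz (i + 1)) (hT.2 i)
  choose b hb1 hb2 hb3 using hstep
  have key' : ∀ i : Fin N, b (i + 1) ≤ b i + 1 := by
    intro i
    have h1 := hcon (i + 1)
    rw [hWeq, hWeq, hWeq] at h1
    have h2 := hb3 (i + 1)
    have h3 := hb3 i
    rw [add_sub_cancel_right] at h1
    linarith
  have hsum : ∑ i : Fin N, b i = 0 := by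
    have hbi : ∀ i : Fin N, b i = Wsum (T i) - Wsum (T (i + 1)) := fun i => by
      have := hb3 i; linarith
    calc ∑ i : Fin N, b i = ∑ i : Fin N, (Wsum (T i) - Wsum (T (i + 1))) :=
          Finset.sum_congr rfl (fun i _ => hbi i)
      _ = ∑ i : Fin N, Wsum (T i) - ∑ i : Fin N, Wsum (T (i + 1)) := Finset.sum_sub_distrib _ _
      _ = 0 := by
          rw [Fintype.sum_equiv (Equiv.addRight (1 : Fin N))
            (fun i => Wsum (T (i + 1))) (fun i => Wsum (T i)) (fun i => rfl)]
          ring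
  have hdist : ∀ (j : ℕ) (hj : j + 1 < N) (hj' : j < N),
      b (⟨j + 1, hj⟩ : Fin N) ≠ b (⟨j, hj'⟩ : Fin N) + 1 := by
    intro j hj hj' heq
    have hone : ((1 : Fin N) : ℕ) = 1 := by
      rw [Fin.val_one']
      exact Nat.mod_eq_of_lt hN
    have hfin_succ : (⟨j, hj'⟩ : Fin N) + 1 = (⟨j + 1, hj⟩ : Fin N) := by
      apply Fin.ext
      rw [Fin.val_add, hone]
      show (j + 1) % N = j + 1
      exact Nat.mod_eq_of_lt hj
    have hbmem : b (⟨j, hj'⟩ : Fin N) ∈ T ((⟨j, hj'⟩ : Fin N) + 1) := by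
      rw [hb2]
      exact Set.mem_insert _ _
    have hmem2 : b (⟨j, hj'⟩ : Fin N) + 1 ∈
        shiftSet (T ((⟨j, hj'⟩ : Fin N) + 1)) 1 :=
      mem_shift.mpr (by simpa using hbmem)
    rw [hfin_succ] at hmem2
    rw [← heq] at hmem2
    exact hb1 _ hmem2
  have hz : ∀ i : Fin N, b i = 0 := cyc_all_zero hN b key' hdist hsum
  -- conclude triviality
  have h0 : ∀ i : Fin N, (0 : ℤ) ∉ shiftSet (T i) 1 := fun i => hz i ▸ hb1 i
  have := mkdv_all_zero hN hT h0
  exact hne (funext this)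
end
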